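/- Let c₁,…,c_k be integers all greater than 1, and let L₁,…,L_{k'} be positive-definite binary integer-matrix lattices each of whose minimum (smallest nonzero represented value) is greater than 1. Then the orthogonal sum ⟨1⟩ ⊥ ⟨c₁⟩ ⊥ ⋯ ⊥ ⟨c_k⟩ ⊥ L₁ ⊥ ⋯ ⊥ L_{k'} does not represent the binary form ⟨1,1⟩ = x² + y². -/

import Mathlib

open Matrix

/-- `G` (Gram matrix of a `ℤ`-lattice) represents the quadratic form with Gram matrix `q`:
there is a `ℤ`-linear injection preserving the bilinear forms. -/
def Represents {ι κ : Type*} [Fintype ι] [Fintype κ]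
    (G : Matrix ι ι ℤ) (q : Matrix κ κ ℤ) : Prop :=
  ∃ S : Matrix ι κ ℤ, Function.Injective S.mulVec ∧ Sᵀ * G * S = q

/-- A symmetric positive-definite integer Gram matrix. -/
def IsPosDefForm {ι : Type*} [Fintype ι] (G : Matrix ι ι ℤ) : Prop :=
  G.IsSymm ∧ ∀ x : ι → ℤ, x ≠ 0 → 0 < x ⬝ᵥ G.mulVec x

/-- The binary form `[a,b,c] = a x² + 2 b x y + c y²` with Gram matrix `((a,b),(b,c))`. -/
def bin (a b c : ℤ) : Matrix (Fin 2) (Fin 2) ℤ := !![a, b; b, c]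


section Aux

variable {k k' : ℕ} (c : Fin k → ℤ) (L : Fin k' → Matrix (Fin 2) (Fin 2) ℤ)

private abbrev Gmat : Matrix ((Fin 1 ⊕ Fin k) ⊕ Fin 2 × Fin k') ((Fin 1 ⊕ Fin k) ⊕ Fin 2 × Fin k') ℤ :=
  Matrix.fromBlocks (Matrix.diagonal (Sum.elim (fun _ : Fin 1 => (1 : ℤ)) c)) 0 0
    (Matrix.blockDiagonal L)

private lemma quad_split (x : ((Fin 1 ⊕ Fin k) ⊕ Fin 2 × Fin k') → ℤ) :
    x ⬝ᵥ (Gmat c L).mulVec x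
    = (x (Sum.inl (Sum.inl 0)))^2 + ∑ i, c i * (x (Sum.inl (Sum.inr i)))^2
      + ∑ j, (fun i => x (Sum.inr (i, j))) ⬝ᵥ (L j).mulVec (fun i => x (Sum.inr (i, j))) := by
  simp [dotProduct, mulVec, fromBlocks, blockDiagonal, diagonal, Fintype.sum_sum_type,
    Fintype.sum_prod_type, Finset.mul_sum, Finset.sum_mul, mul_ite, ite_mul, Fin.sum_univ_succ,
    sq, mul_comm, mul_assoc, mul_left_comm]
  rw [Finset.sum_add_distrib]

private lemma norm_one (hc : ∀ i, 1 < c i)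
    (hLmin : ∀ j, ∀ x : Fin 2 → ℤ, x ≠ 0 → 1 < x ⬝ᵥ (L j).mulVec x)
    (x : ((Fin 1 ⊕ Fin k) ⊕ Fin 2 × Fin k') → ℤ)
    (hx : x ⬝ᵥ (Gmat c L).mulVec x = 1) :
    x = Pi.single (Sum.inl (Sum.inl 0)) (x (Sum.inl (Sum.inl 0))) ∧
      (x (Sum.inl (Sum.inl 0)))^2 = 1 := by
  rw [quad_split] at hx
  set A := (x (Sum.inl (Sum.inl 0)))^2 with hA
  have hterm1 : ∀ i : Fin k, 0 ≤ c i * (x (Sum.inl (Sum.inr i)))^2 := fun i =>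
    mul_nonneg (by linarith [hc i]) (sq_nonneg _)
  have hterm2 : ∀ j : Fin k',
      0 ≤ (fun i => x (Sum.inr (i, j))) ⬝ᵥ (L j).mulVec (fun i => x (Sum.inr (i, j))) := by
    intro j
    by_cases h : (fun i => x (Sum.inr (i, j))) = (0 : Fin 2 → ℤ)
    · rw [h]; simp
    · linarith [hLmin j _ h]
  have hB : 0 ≤ ∑ i, c i * (x (Sum.inl (Sum.inr i)))^2 :=
    Finset.sum_nonneg fun i _ => hterm1 i
  have hC : 0 ≤ ∑ j, (fun i => x (Sum.inr (i, j))) ⬝ᵥ (L j).mulVec (fun i => x (Sum.inr (i, j))) :=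
    Finset.sum_nonneg fun j _ => hterm2 j
  have hA0 : 0 ≤ A := sq_nonneg _
  -- every small coordinate vanishes
  have hsmall : ∀ i : Fin k, x (Sum.inl (Sum.inr i)) = 0 := by
    intro i
    by_contra h
    have h1 : 1 ≤ (x (Sum.inl (Sum.inr i)))^2 := by rcases lt_or_gt_of_ne h with h|h <;> nlinarith
    have h2 : 2 ≤ c i * (x (Sum.inl (Sum.inr i)))^2 := by nlinarith [hc i]
    have h3 : c i * (x (Sum.inl (Sum.inr i)))^2 ≤ ∑ i, c i * (x (Sum.inl (Sum.inr i)))^2 :=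
      Finset.single_le_sum (fun i _ => hterm1 i) (Finset.mem_univ i)
    linarith
  have hblock : ∀ j : Fin k', (fun i => x (Sum.inr (i, j))) = (0 : Fin 2 → ℤ) := by
    intro j
    by_contra h
    have h2 : 2 ≤ (fun i => x (Sum.inr (i, j))) ⬝ᵥ (L j).mulVec (fun i => x (Sum.inr (i, j))) :=
      hLmin j _ h
    have h3 : (fun i => x (Sum.inr (i, j))) ⬝ᵥ (L j).mulVec (fun i => x (Sum.inr (i, j))) ≤
        ∑ j, (fun i => x (Sum.inr (i, j))) ⬝ᵥ (L j).mulVec (fun i => x (Sum.inr (i, j))) :=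
      Finset.single_le_sum (fun j _ => hterm2 j) (Finset.mem_univ j)
    linarith
  constructor
  · funext a
    rcases a with (⟨m⟩ | i) | ⟨i, j⟩
    · rcases m with ⟨_ | m, hm⟩
      · simp
      · omega
    · rw [hsmall i]
      rw [Pi.single_eq_of_ne (by simp)]
    · have hz : x (Sum.inr (i, j)) = 0 := by simpa using congrFun (hblock j) i
      rw [hz, Pi.single_eq_of_ne (by simp)]
  · have hBz : ∑ i, c i * (x (Sum.inl (Sum.inr i)))^2 = 0 := by
      apply Finset.sum_eq_zero; intro i _; rw [hsmall i]; ring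
    have hCz : ∑ j, (fun i => x (Sum.inr (i, j))) ⬝ᵥ (L j).mulVec (fun i => x (Sum.inr (i, j))) = 0 := by
      apply Finset.sum_eq_zero; intro j _; rw [hblock j]; simp
    rw [hBz, hCz] at hx; linarith

end Aux

/-- if `c₁, …, c_k > 1` and `L₁, …, L_{k'}` are positive-definite binary
lattices of minimum `> 1`, then `⟨1⟩ ⊥ ⟨c₁⟩ ⊥ ⋯ ⊥ ⟨c_k⟩ ⊥ L₁ ⊥ ⋯ ⊥ L_{k'}` does not
represent `⟨1,1⟩ = x² + y²`. -/
theorem truant_one_one {k k' : ℕ} (c : Fin k → ℤ) (hc : ∀ i, 1 < c i)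
    (L : Fin k' → Matrix (Fin 2) (Fin 2) ℤ)
    (hLsymm : ∀ j, (L j).IsSymm)
    (hLmin : ∀ j, ∀ x : Fin 2 → ℤ, x ≠ 0 → 1 < x ⬝ᵥ (L j).mulVec x) :
    ¬ Represents
        (Matrix.fromBlocks
          (Matrix.diagonal (Sum.elim (fun _ : Fin 1 => (1 : ℤ)) c)) 0 0
          (Matrix.blockDiagonal L))
        (bin 1 0 1) := by
  rintro ⟨S, hinj, hS⟩
  set G := Gmat c L with hG
  have entry : ∀ a b : Fin 2,
      (fun i => S i a) ⬝ᵥ G.mulVec (fun i => S i b) = bin 1 0 1 a b := by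
    intro a b
    rw [← hS]
    simp only [mul_apply, dotProduct, mulVec, transpose_apply, Finset.sum_mul, Finset.mul_sum]
    rw [Finset.sum_comm]
    exact Finset.sum_congr rfl fun i _ => Finset.sum_congr rfl fun j _ => by ring
  have h00 := entry 0 0
  have h11 := entry 1 1
  have h01 := entry 0 1
  simp only [bin, Matrix.cons_val', Matrix.cons_val_zero, Matrix.cons_val_one, Matrix.head_cons,
    Matrix.empty_val', Matrix.cons_val_fin_one, Matrix.head_fin_const, Matrix.of_apply] at h00 h11 h01
  obtain ⟨hv0, he0⟩ := norm_one c L hc hLmin _ h00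
  obtain ⟨hv1, he1⟩ := norm_one c L hc hLmin _ h11
  set e₀ : (Fin 1 ⊕ Fin k) ⊕ Fin 2 × Fin k' := Sum.inl (Sum.inl 0)
  rw [hv0, hv1] at h01
  have hGe : G e₀ e₀ = 1 := by simp [hG, Gmat, fromBlocks, diagonal, e₀]
  rw [Matrix.mulVec_single, single_dotProduct, Pi.smul_apply, col_apply, op_smul_eq_mul] at h01
  simp only [hGe, one_mul] at h01
  have : S e₀ 0 ≠ 0 := by intro h; rw [h] at he0; simp at he0
  have : S e₀ 1 ≠ 0 := by intro h; rw [h] at he1; simp at he1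
  exact absurd h01 (by
    intro h
    rcases mul_eq_zero.mp h with h | h <;> contradiction)
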